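/- Let k ⊆ K ⊆ L be fields of characteristic p > 0. Say an extension E/F has the Epp property if every element of E^{p^∞} = ⋂_n E^{p^n} is algebraic separable over F. If L/K and K/k have the Epp property, then L/k has the Epp property. -/
import Mathlib

/-- The maximal perfect subfield `L^{p^∞} = ⋂_n L^{p^n}` of a field `L`
(in characteristic `p`, `Subfield.closure (Set.range (· ^ p ^ n))` is exactly the subfield of
`p^n`-th powers). -/
def perfectCore (L : Type*) [Field L] (p : ℕ) : Subfield L :=
  ⨅ n : ℕ, Subfield.closure (Set.range (· ^ p ^ n))

/-- An extension `E/F` has the *Epp property* if every element of the maximal perfect subfield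
`E^{p^∞}` is algebraic separable over `F`. -/
def HasEppProperty (F E : Type*) [Field F] [Field E] [Algebra F E] (p : ℕ) : Prop :=
  ∀ x ∈ perfectCore E p, ∃ q : Polynomial F, q ≠ 0 ∧ q.Separable ∧ Polynomial.aeval x q = 0

open Polynomial IntermediateField

section aux

variable {E : Type*} [Field E] (p : ℕ) [Fact p.Prime] [CharP E p]

lemma mem_perfectCore_iff {x : E} :
    x ∈ perfectCore E p ↔ ∀ n : ℕ, ∃ y : E, y ^ p ^ n = x := by
  have h : ∀ n : ℕ, Subfield.closure (Set.range (· ^ p ^ n : E → E))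
      = (iterateFrobenius E p n).fieldRange := by
    intro n
    have hs : Set.range (· ^ p ^ n : E → E) = ((iterateFrobenius E p n).fieldRange : Set E) := by
      ext z
      simp [RingHom.mem_fieldRange, iterateFrobenius_def, eq_comm]
    rw [hs, Subfield.closure_eq]
  simp only [perfectCore, Subfield.mem_iInf, h, RingHom.mem_fieldRange, iterateFrobenius_def]

lemma exists_root_mem_perfectCore {x : E} (hx : x ∈ perfectCore E p) (n : ℕ) :
    ∃ y : E, y ∈ perfectCore E p ∧ y ^ p ^ n = x := by
  rw [mem_perfectCore_iff] at hx
  obtain ⟨y, hy⟩ := hx n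
  refine ⟨y, (mem_perfectCore_iff p).2 fun m => ?_, hy⟩
  obtain ⟨z, hz⟩ := hx (m + n)
  refine ⟨z, ?_⟩
  have hinj : Function.Injective (iterateFrobenius E p n) := (iterateFrobenius E p n).injective
  apply hinj
  simp only [iterateFrobenius_def]
  rw [← pow_mul, ← pow_add, hz]
  exact hy.symm

end aux

lemma isSeparable_of_epp {F E : Type*} [Field F] [Field E] [Algebra F E] {x : E}
    (h : ∃ q : Polynomial F, q ≠ 0 ∧ q.Separable ∧ Polynomial.aeval x q = 0) :
    IsSeparable F x ∧ IsIntegral F x := by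
  obtain ⟨q, hq0, hqs, hqx⟩ := h
  have hint : IsIntegral F x := (IsAlgebraic.isIntegral ⟨q, hq0, hqx⟩)
  exact ⟨hqs.of_dvd (minpoly.dvd F x hqx), hint⟩

/-- Let `k ⊆ K ⊆ L` be fields of characteristic `p > 0`.  If `L/K` and
`K/k` have the Epp property, then `L/k` has the Epp property. -/
theorem hasEppProperty_trans {k K L : Type u} [Field k] [Field K] [Field L]
    [Algebra k K] [Algebra K L] [Algebra k L] [IsScalarTower k K L]
    (p : ℕ) (hp : p.Prime) [CharP k p]
    (hLK : HasEppProperty K L p) (hKk : HasEppProperty k K p) :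
    HasEppProperty k L p := by
  haveI := Fact.mk hp
  haveI : CharP K p := charP_of_injective_algebraMap (algebraMap k K).injective p
  haveI : CharP L p := charP_of_injective_algebraMap (algebraMap K L).injective p
  intro x hx
  obtain ⟨hxK, hxint⟩ := isSeparable_of_epp (hLK x hx)
  set f := minpoly K x with hfdef
  -- Step 1: every coefficient of `f` lies in the perfect core of `K`.
  have hcoeff : ∀ i, f.coeff i ∈ perfectCore K p := by
    intro i
    rw [mem_perfectCore_iff]
    intro n
    obtain ⟨y, hy, hyx⟩ := exists_root_mem_perfectCore p hx n
    obtain ⟨hyK, hyint⟩ := isSeparable_of_epp (hLK y hy)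
    -- `y ∈ K⟮x⟯`
    haveI : CharP K⟮x⟯ p := charP_of_injective_algebraMap (algebraMap K K⟮x⟯).injective p
    have hyE : IsSeparable K⟮x⟯ y := IsSeparable.tower_top _ hyK
    have hyintE : IsIntegral K⟮x⟯ y := hyint.tower_top
    have h1 : (minpoly K⟮x⟯ y).natSepDegree = 1 := by
      rw [minpoly.natSepDegree_eq_one_iff_pow_mem p]
      exact ⟨n, ⟨⟨x, mem_adjoin_simple_self K x⟩, hyx.symm⟩⟩
    have hdeg1 : (minpoly K⟮x⟯ y).degree = 1 := by
      have hnd : (minpoly K⟮x⟯ y).natDegree = 1 := by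
        rw [← hyE.natSepDegree_eq_natDegree, h1]
      rw [degree_eq_natDegree (minpoly.ne_zero hyintE), hnd, Nat.cast_one]
    have hymem : y ∈ K⟮x⟯ := by
      obtain ⟨y', hy'⟩ := minpoly.degree_eq_one_iff.mp hdeg1
      exact hy' ▸ y'.2
    have hxmem : x ∈ K⟮y⟯ := by
      rw [← hyx]; exact pow_mem (mem_adjoin_simple_self K y) _
    have hEq : K⟮x⟯ = K⟮y⟯ :=
      le_antisymm (adjoin_simple_le_iff.2 hxmem) (adjoin_simple_le_iff.2 hymem)
    set g := minpoly K y with hgdef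
    set h := g.map (iterateFrobenius K p n) with hhdef
    have hmonic : h.Monic := (minpoly.monic hyint).map _
    have hh0 : Polynomial.aeval x h = 0 := by
      have hcomm : (algebraMap K L).comp (iterateFrobenius K p n)
          = (iterateFrobenius L p n).comp (algebraMap K L) := by
        ext a
        simp [iterateFrobenius_def, map_pow]
      have : Polynomial.aeval x h
          = (iterateFrobenius L p n) ((g.map (algebraMap K L)).eval y) := by
        rw [hhdef, aeval_def, eval₂_map, hcomm, ← eval₂_map]
        have hxy : x = (iterateFrobenius L p n) y := by
          rw [iterateFrobenius_def, hyx]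
        rw [hxy, eval₂_hom]
      rw [this]
      have : (g.map (algebraMap K L)).eval y = 0 := by
        rw [eval_map, ← aeval_def, hgdef, minpoly.aeval]
      rw [this, map_zero]
    have hdvd : f ∣ h := minpoly.dvd K x hh0
    have hndeg : f.natDegree = h.natDegree := by
      have h1 : f.natDegree = Module.finrank K K⟮x⟯ := (adjoin.finrank hxint).symm
      have h2 : g.natDegree = Module.finrank K K⟮y⟯ := (adjoin.finrank hyint).symm
      have h3 : h.natDegree = g.natDegree :=
        natDegree_map_eq_of_injective (iterateFrobenius K p n).injective g
      rw [h1, hEq, ← h2]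
      exact h3.symm
    have hfeq : f = h :=
      eq_of_monic_of_associated (minpoly.monic hxint) hmonic
        (associated_of_dvd_of_natDegree_le hdvd hmonic.ne_zero hndeg.ge)
    refine ⟨g.coeff i, ?_⟩
    rw [hfeq, hhdef, coeff_map, iterateFrobenius_def]
  -- Step 2: the coefficients of `f` are separable over `k`, so they lie in the
  -- separable closure of `k` in `K`.
  set S := separableClosure k K with hSdef
  have hcS : ∀ c ∈ (↑f.coeffs : Set K), c ∈ S.toSubring := by
    intro c hc
    simp only [Finset.coe_sort_coe, Finset.mem_coe, mem_coeffs_iff] at hc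
    obtain ⟨j, _, rfl⟩ := hc
    exact mem_separableClosure_iff.2 (isSeparable_of_epp (hKk _ (hcoeff j))).1
  set g : S[X] := f.toSubring S.toSubring hcS with hgdef
  have hmap : g.map (algebraMap S K) = f := f.map_toSubring S.toSubring hcS
  -- Step 3: `x` is separable over `S`, and `S/k` is separable, hence `x` is separable over `k`.
  have hg0 : Polynomial.aeval x g = 0 := by
    have := minpoly.aeval K x
    rw [← hfdef, ← hmap, aeval_map_algebraMap] at this
    exact this
  have hgne : g ≠ 0 := by
    intro h0
    have : f = 0 := by rw [← hmap, h0, Polynomial.map_zero]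
    exact minpoly.ne_zero hxint this
  have hgsep : g.Separable := by
    rw [← separable_map (algebraMap S K), hmap]
    exact hxK
  have hxintS : IsIntegral S x := IsAlgebraic.isIntegral ⟨g, hgne, hg0⟩
  have hxS : IsSeparable S x := hgsep.of_dvd (minpoly.dvd S x hg0)
  have hxk : IsSeparable k x := IsSeparable.of_algebra_isSeparable_of_isSeparable k hxS
  have hxkint : IsIntegral k x := by
    haveI : Algebra.IsIntegral k S := ⟨fun s => Algebra.IsSeparable.isIntegral k s⟩
    exact isIntegral_trans x hxintS
  exact ⟨minpoly k x, minpoly.ne_zero hxkint, hxk, minpoly.aeval k x⟩
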